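/- arXiv:2002.10121 — 5 statements merged into one kernel-verified Lean document; each statement's English description precedes it below -/
import Mathlib

section
/- Let X₁, X₂, … be i.i.d. Bernoulli(μ) random variables and let Mₙ = (X₁+⋯+Xₙ)/n. Suppose θ > 2/3 and m ≥ 4 is an integer with 1/m ≤ 1-θ < 1/(m-1). If μ ≥ (1+θ)/2, then the probability that Mₙ > θ for all n ≥ 1 is at least exp(-1/2)/3. -/
open MeasureTheory ProbabilityTheory Finset

namespace Stmt3Aux

noncomputable def step (m : ℕ) (x : ℝ) : ℝ := if x = 1 then 1 else 1 - m

lemma measurable_step (m : ℕ) : Measurable (step m) :=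
  Measurable.ite measurableSet_eq measurable_const measurable_const

def walkSet {Ω : Type*} (X : ℕ → Ω → ℝ) (m k N : ℕ) (w : ℤ) : Set Ω :=
  {ω | ∀ n ∈ Finset.Icc 1 N, (0:ℝ) < (w:ℝ) + ∑ i ∈ Finset.range n, step m (X (k+i) ω)}

def cyl (m N : ℕ) (w : ℤ) : Set (Fin N → ℝ) :=
  {v | ∀ n ∈ Finset.Icc 1 N,
    (0:ℝ) < (w:ℝ) + ∑ i ∈ Finset.range n, (if h : i < N then step m (v ⟨i, h⟩) else 0)}

lemma walkSet_eq_preimage {Ω : Type*} (X : ℕ → Ω → ℝ) (m k N : ℕ) (w : ℤ) :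
    walkSet X m k N w = (fun ω (i : Fin N) => X (k + i) ω) ⁻¹' cyl m N w := by
  ext ω
  simp only [walkSet, cyl, Set.mem_setOf_eq, Set.mem_preimage]
  refine forall₂_congr fun n hn => ?_
  rw [Finset.mem_Icc] at hn
  have : ∀ i ∈ Finset.range n,
      (if h : i < N then step m (X (k+i) ω) else 0) = step m (X (k+i) ω) := by
    intro i hi
    rw [dif_pos (lt_of_lt_of_le (Finset.mem_range.1 hi) hn.2)]
  rw [Finset.sum_congr rfl this]

lemma measurableSet_cyl (m N : ℕ) (w : ℤ) : MeasurableSet (cyl m N w) := by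
  have : cyl m N w = ⋂ n ∈ (Finset.Icc 1 N : Finset ℕ), {v : Fin N → ℝ |
      (0:ℝ) < (w:ℝ) + ∑ i ∈ Finset.range n, (if h : i < N then step m (v ⟨i, h⟩) else 0)} := by
    ext v; simp [cyl]
  rw [this]
  refine MeasurableSet.biInter (Finset.Icc 1 N).countable_toSet fun n _ => ?_
  have hmeas : Measurable fun v : Fin N → ℝ =>
      (w:ℝ) + ∑ i ∈ Finset.range n, (if h : i < N then step m (v ⟨i, h⟩) else 0) := by
    apply Measurable.const_add
    apply Finset.measurable_sum
    intro i _
    by_cases h : i < N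
    · simp only [dif_pos h]
      exact (measurable_step m).comp (measurable_pi_apply _)
    · simp only [dif_neg h]
      exact measurable_const
  exact measurableSet_lt measurable_const hmeas

lemma measurableSet_walkSet {Ω : Type*} [MeasurableSpace Ω] (X : ℕ → Ω → ℝ)
    (hX : ∀ i, Measurable (X i)) (m k N : ℕ) (w : ℤ) :
    MeasurableSet (walkSet X m k N w) := by
  rw [walkSet_eq_preimage]
  exact (measurable_pi_lambda _ fun i => hX _) (measurableSet_cyl m N w)




variable {Ω : Type*} [MeasurableSpace Ω] {P : Measure Ω} [IsProbabilityMeasure P]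
  {X : ℕ → Ω → ℝ}

lemma indep_head (hmeas : ∀ i, Measurable (X i))
    (hindep : iIndepFun X P) (k n : ℕ) :
    IndepFun (X k) (fun ω (i : Fin n) => X (k + 1 + i) ω) P := by
  classical
  set T : Finset ℕ := (Finset.range n).image (fun i => k + 1 + i) with hT
  have hST : Disjoint ({k} : Finset ℕ) T := by
    simp only [Finset.disjoint_left, Finset.mem_singleton, hT, Finset.mem_image,
      Finset.mem_range]
    rintro a rfl ⟨i, _, h⟩
    omega
  have h := hindep.indepFun_finset {k} T hST hmeas
  have hmem : ∀ i : Fin n, k + 1 + (i : ℕ) ∈ T := by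
    intro i
    simp only [hT, Finset.mem_image, Finset.mem_range]
    exact ⟨i, i.isLt, rfl⟩
  have h1 : Measurable fun v : ({k} : Finset ℕ) → ℝ =>
      v ⟨k, Finset.mem_singleton_self k⟩ := measurable_pi_apply _
  have h2 : Measurable fun (v : ↥T → ℝ) (i : Fin n) =>
      v (⟨k + 1 + (i : ℕ), hmem i⟩ : ↥T) := measurable_pi_lambda _ fun i => measurable_pi_apply _
  exact h.comp h1 h2

lemma measure_inter_eq (hmeas : ∀ i, Measurable (X i))
    (hindep : iIndepFun X P) (k n : ℕ)
    {s : Set ℝ} (hs : MeasurableSet s) {B : Set (Fin n → ℝ)} (hB : MeasurableSet B) :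
    P (X k ⁻¹' s ∩ (fun ω (i : Fin n) => X (k + 1 + i) ω) ⁻¹' B)
      = P (X k ⁻¹' s) * P ((fun ω (i : Fin n) => X (k + 1 + i) ω) ⁻¹' B) :=
  (indep_head hmeas hindep k n).measure_inter_preimage_eq_mul s B hs hB




variable {Ω : Type*} [MeasurableSpace Ω] {P : Measure Ω} [IsProbabilityMeasure P]
  {X : ℕ → Ω → ℝ} {μ : ℝ}

lemma prob_one (hmeas : ∀ i, Measurable (X i))
    (hbern : ∀ i, Measure.map (X i) P
      = ENNReal.ofReal μ • Measure.dirac (1 : ℝ) + ENNReal.ofReal (1 - μ) • Measure.dirac (0 : ℝ))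
    (k : ℕ) : P (X k ⁻¹' {(1:ℝ)}) = ENNReal.ofReal μ := by
  rw [← Measure.map_apply (hmeas k) (measurableSet_singleton 1), hbern k]
  simp [Measure.dirac_apply' _ (measurableSet_singleton (1:ℝ))]

lemma prob_not_one (hmeas : ∀ i, Measurable (X i))
    (hbern : ∀ i, Measure.map (X i) P
      = ENNReal.ofReal μ • Measure.dirac (1 : ℝ) + ENNReal.ofReal (1 - μ) • Measure.dirac (0 : ℝ))
    (k : ℕ) : P (X k ⁻¹' {(1:ℝ)}ᶜ) = ENNReal.ofReal (1 - μ) := by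
  rw [← Measure.map_apply (hmeas k) (measurableSet_singleton (1:ℝ)).compl, hbern k]
  simp [Measure.dirac_apply' _ (measurableSet_singleton (1:ℝ)).compl]

lemma prob_vals (hmeas : ∀ i, Measurable (X i))
    (hbern : ∀ i, Measure.map (X i) P
      = ENNReal.ofReal μ • Measure.dirac (1 : ℝ) + ENNReal.ofReal (1 - μ) • Measure.dirac (0 : ℝ))
    (k : ℕ) : P (X k ⁻¹' ({0, 1} : Set ℝ)ᶜ) = 0 := by
  have hms : MeasurableSet (({0, 1} : Set ℝ)ᶜ) := (by measurability : MeasurableSet ({0,1} : Set ℝ)).compl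
  rw [← Measure.map_apply (hmeas k) hms, hbern k]
  simp [Measure.dirac_apply' _ hms]



-- subset lemmas for the one-step decomposition
lemma subset_one {X : ℕ → Ω → ℝ} (m k N : ℕ) (w : ℤ) (hw : 1 ≤ w) :
    X k ⁻¹' {(1:ℝ)} ∩ walkSet X m (k+1) N (w+1) ⊆ walkSet X m k (N+1) w := by
  rintro ω ⟨h1, h2⟩
  simp only [Set.mem_preimage, Set.mem_singleton_iff] at h1
  intro n hn
  rw [Finset.mem_Icc] at hn
  obtain ⟨n', rfl⟩ : ∃ n', n = n' + 1 := ⟨n - 1, by omega⟩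
  have hsum : ∑ i ∈ Finset.range (n' + 1), step m (X (k+i) ω)
      = (∑ i ∈ Finset.range n', step m (X (k+1+i) ω)) + step m (X k ω) := by
    rw [Finset.sum_range_succ']
    congr 1
    · refine Finset.sum_congr rfl fun i _ => ?_
      congr 2
      omega
  rw [hsum]
  have hstep : step m (X k ω) = 1 := by rw [step, if_pos h1]
  rw [hstep]
  rcases Nat.eq_zero_or_pos n' with rfl | hn'
  · simp only [Finset.range_zero, Finset.sum_empty, zero_add]
    have : (1:ℝ) ≤ (w:ℝ) := by exact_mod_cast hw
    linarith
  · have := h2 n' (Finset.mem_Icc.2 ⟨hn', by omega⟩)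
    push_cast at this ⊢
    linarith

lemma subset_zero {X : ℕ → Ω → ℝ} (m k N : ℕ) (w : ℤ) (hw : (m:ℤ) ≤ w) :
    X k ⁻¹' {(1:ℝ)}ᶜ ∩ walkSet X m (k+1) N (w+1-m) ⊆ walkSet X m k (N+1) w := by
  rintro ω ⟨h1, h2⟩
  simp only [Set.mem_preimage, Set.mem_compl_iff, Set.mem_singleton_iff] at h1
  intro n hn
  rw [Finset.mem_Icc] at hn
  obtain ⟨n', rfl⟩ : ∃ n', n = n' + 1 := ⟨n - 1, by omega⟩
  have hsum : ∑ i ∈ Finset.range (n' + 1), step m (X (k+i) ω)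
      = (∑ i ∈ Finset.range n', step m (X (k+1+i) ω)) + step m (X k ω) := by
    rw [Finset.sum_range_succ']
    congr 1
    · refine Finset.sum_congr rfl fun i _ => ?_
      congr 2
      omega
  rw [hsum]
  have hstep : step m (X k ω) = 1 - m := by rw [step, if_neg h1]
  rw [hstep]
  have hwm : ((m:ℤ):ℝ) ≤ (w:ℝ) := by exact_mod_cast hw
  rcases Nat.eq_zero_or_pos n' with rfl | hn'
  · simp only [Finset.range_zero, Finset.sum_empty, zero_add]
    push_cast at hwm ⊢
    linarith
  · have := h2 n' (Finset.mem_Icc.2 ⟨hn', by omega⟩)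
    push_cast at this hwm ⊢
    linarith

lemma walk_bound (hmeas : ∀ i, Measurable (X i))
    (hindep : iIndepFun X P)
    (hbern : ∀ i, Measure.map (X i) P
      = ENNReal.ofReal μ • Measure.dirac (1 : ℝ) + ENNReal.ofReal (1 - μ) • Measure.dirac (0 : ℝ))
    (m : ℕ) (s A : ℝ)
    (hμ0 : 0 ≤ μ) (hμ1 : μ ≤ 1)
    (hs1 : 1 < s) (hA0 : 0 ≤ A) (hA1 : A ≤ 1)
    (hcon : μ + (1 - μ) * s ^ m ≤ s)
    (hAge : (1 - μ) * s ^ m ≤ A * (s - μ)) :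
    ∀ (N : ℕ) (k : ℕ) (w : ℤ), 1 ≤ w →
      ENNReal.ofReal (1 - A * s ^ (-w)) ≤ P (walkSet X m k N w) := by
  have hs0 : (0:ℝ) < s := lt_trans one_pos hs1
  have hp0 : (0:ℝ) ≤ 1 - μ := by linarith
  have hφle1 : ∀ w : ℤ, 1 - A * s ^ (-w) ≤ 1 := by
    intro w
    have : 0 ≤ A * s ^ (-w) := mul_nonneg hA0 (zpow_nonneg hs0.le _)
    linarith
  have hφ0 : ∀ w : ℤ, 1 ≤ w → 0 ≤ 1 - A * s ^ (-w) := by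
    intro w hw
    have h1 : s ^ (-w) ≤ 1 := zpow_le_one_of_nonpos₀ hs1.le (by omega)
    nlinarith [zpow_nonneg hs0.le (-w)]
  intro N
  induction N with
  | zero =>
    intro k w hw
    have huniv : walkSet X m k 0 w = Set.univ := by
      ext ω; simp [walkSet]
    rw [huniv, measure_univ]
    exact ENNReal.ofReal_le_one.2 (hφle1 w)
  | succ N ih =>
    intro k w hw
    -- probability of the "one" branch
    have hkey1 : P (X k ⁻¹' {(1:ℝ)} ∩ walkSet X m (k+1) N (w+1))
        = ENNReal.ofReal μ * P (walkSet X m (k+1) N (w+1)) := by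
      rw [walkSet_eq_preimage X m (k+1) N (w+1),
        measure_inter_eq hmeas hindep k N (measurableSet_singleton 1)
          (measurableSet_cyl m N (w+1)), prob_one hmeas hbern k]
    have hP1 : ENNReal.ofReal (μ * (1 - A * s ^ (-(w+1))))
        ≤ P (X k ⁻¹' {(1:ℝ)} ∩ walkSet X m (k+1) N (w+1)) := by
      rw [ENNReal.ofReal_mul hμ0, hkey1]
      exact mul_le_mul_right (ih (k+1) (w+1) (by omega)) _
    by_cases hwm : (m:ℤ) ≤ w
    · -- both branches survive
      have hkey2 : P (X k ⁻¹' {(1:ℝ)}ᶜ ∩ walkSet X m (k+1) N (w+1-m))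
          = ENNReal.ofReal (1-μ) * P (walkSet X m (k+1) N (w+1-m)) := by
        rw [walkSet_eq_preimage X m (k+1) N (w+1-m),
          measure_inter_eq hmeas hindep k N (measurableSet_singleton (1:ℝ)).compl
            (measurableSet_cyl m N (w+1-m)), prob_not_one hmeas hbern k]
      have hP2 : ENNReal.ofReal ((1-μ) * (1 - A * s ^ (-(w+1-m))))
          ≤ P (X k ⁻¹' {(1:ℝ)}ᶜ ∩ walkSet X m (k+1) N (w+1-m)) := by
        rw [ENNReal.ofReal_mul hp0, hkey2]
        exact mul_le_mul_right (ih (k+1) (w+1-m) (by omega)) _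
      -- real inequality
      have hu : (0:ℝ) < s ^ (-(w+1)) := zpow_pos hs0 _
      have e1 : s ^ (-w) = s ^ (-(w+1)) * s := by
        have h : -w = (-(w+1)) + 1 := by ring
        rw [h, zpow_add_one₀ (ne_of_gt hs0)]
      have e2 : s ^ (-(w+1-(m:ℤ))) = s ^ (-(w+1)) * s ^ m := by
        have h : -(w+1-(m:ℤ)) = (-(w+1)) + (m:ℤ) := by ring
        rw [h, zpow_add₀ (ne_of_gt hs0), zpow_natCast]
      have hreal : 1 - A * s ^ (-w)
          ≤ μ * (1 - A * s ^ (-(w+1))) + (1-μ) * (1 - A * s ^ (-(w+1-(m:ℤ)))) := by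
        rw [e1, e2]
        nlinarith [mul_nonneg (mul_nonneg hA0 hu.le) (sub_nonneg.2 hcon)]
      have hdisj : Disjoint (X k ⁻¹' {(1:ℝ)} ∩ walkSet X m (k+1) N (w+1))
          (X k ⁻¹' {(1:ℝ)}ᶜ ∩ walkSet X m (k+1) N (w+1-m)) :=
        Disjoint.mono Set.inter_subset_left Set.inter_subset_left disjoint_compl_right
      have hms2 : MeasurableSet (X k ⁻¹' {(1:ℝ)}ᶜ ∩ walkSet X m (k+1) N (w+1-m)) :=
        ((hmeas k) (measurableSet_singleton 1).compl).inter
          (measurableSet_walkSet X hmeas m (k+1) N (w+1-m))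
      calc ENNReal.ofReal (1 - A * s ^ (-w))
          ≤ ENNReal.ofReal (μ * (1 - A * s ^ (-(w+1))) + (1-μ) * (1 - A * s ^ (-(w+1-(m:ℤ))))) :=
            ENNReal.ofReal_le_ofReal hreal
        _ = ENNReal.ofReal (μ * (1 - A * s ^ (-(w+1))))
            + ENNReal.ofReal ((1-μ) * (1 - A * s ^ (-(w+1-(m:ℤ))))) :=
            ENNReal.ofReal_add (mul_nonneg hμ0 (hφ0 _ (by omega)))
              (mul_nonneg hp0 (hφ0 _ (by omega)))
        _ ≤ P (X k ⁻¹' {(1:ℝ)} ∩ walkSet X m (k+1) N (w+1))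
            + P (X k ⁻¹' {(1:ℝ)}ᶜ ∩ walkSet X m (k+1) N (w+1-m)) := add_le_add hP1 hP2
        _ = P ((X k ⁻¹' {(1:ℝ)} ∩ walkSet X m (k+1) N (w+1))
            ∪ (X k ⁻¹' {(1:ℝ)}ᶜ ∩ walkSet X m (k+1) N (w+1-m))) :=
            (measure_union hdisj hms2).symm
        _ ≤ P (walkSet X m k (N+1) w) :=
            measure_mono (Set.union_subset (subset_one m k N w hw) (subset_zero m k N w hwm))
    · -- only the "one" branch
      push_neg at hwm
      have hsm : (0:ℝ) < s ^ m := pow_pos hs0 m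
      have hsμ : (0:ℝ) < s - μ := by linarith
      have hmono : s ^ (-(m:ℤ)) ≤ s ^ (-(w+1)) := zpow_le_zpow_right₀ hs1.le (by omega)
      have hc1 : (1-μ) ≤ A * (s - μ) * s ^ (-(m:ℤ)) := by
        have h := mul_le_mul_of_nonneg_right hAge (le_of_lt (inv_pos.2 hsm))
        rw [mul_inv_cancel_right₀ (ne_of_gt hsm)] at h
        rw [zpow_neg, zpow_natCast]
        exact h
      have hc2 : A * (s - μ) * s ^ (-(m:ℤ)) ≤ A * (s - μ) * s ^ (-(w+1)) :=
        mul_le_mul_of_nonneg_left hmono (mul_nonneg hA0 hsμ.le)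
      have hu : (0:ℝ) < s ^ (-(w+1)) := zpow_pos hs0 _
      have e1 : s ^ (-w) = s ^ (-(w+1)) * s := by
        have h : -w = (-(w+1)) + 1 := by ring
        rw [h, zpow_add_one₀ (ne_of_gt hs0)]
      have hreal : 1 - A * s ^ (-w) ≤ μ * (1 - A * s ^ (-(w+1))) := by
        rw [e1]
        nlinarith [hc1.trans hc2]
      calc ENNReal.ofReal (1 - A * s ^ (-w))
          ≤ ENNReal.ofReal (μ * (1 - A * s ^ (-(w+1)))) := ENNReal.ofReal_le_ofReal hreal
        _ ≤ P (X k ⁻¹' {(1:ℝ)} ∩ walkSet X m (k+1) N (w+1)) := hP1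
        _ ≤ P (walkSet X m k (N+1) w) := measure_mono (subset_one m k N w hw)

def dropFirst (j N : ℕ) : (Fin (j + N) → ℝ) → (Fin N → ℝ) :=
  fun v i => v ⟨j + i, by omega⟩

lemma measurable_dropFirst (j N : ℕ) : Measurable (dropFirst j N) :=
  measurable_pi_lambda _ fun i => measurable_pi_apply _

def onesCyl (m j N : ℕ) (w : ℤ) : Set (Fin (j + N) → ℝ) :=
  {v | ∀ i : Fin (j + N), (i : ℕ) < j → v i = 1} ∩ dropFirst j N ⁻¹' cyl m N w

lemma measurableSet_onesCyl (m j N : ℕ) (w : ℤ) : MeasurableSet (onesCyl m j N w) := by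
  refine MeasurableSet.inter ?_ ((measurable_dropFirst j N) (measurableSet_cyl m N w))
  have h : {v : Fin (j+N) → ℝ | ∀ i : Fin (j + N), (i : ℕ) < j → v i = 1}
      = ⋂ i : Fin (j + N), {v | (i : ℕ) < j → v i = 1} := by ext v; simp
  rw [h]
  refine MeasurableSet.iInter fun i => ?_
  by_cases hij : (i : ℕ) < j
  · have h2 : {v : Fin (j+N) → ℝ | (i:ℕ) < j → v i = 1}
        = (fun v : Fin (j+N) → ℝ => v i) ⁻¹' {1} := by ext v; simp [hij]
    rw [h2]
    exact measurable_pi_apply i (measurableSet_singleton 1)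
  · have h2 : {v : Fin (j+N) → ℝ | (i:ℕ) < j → v i = 1} = Set.univ := by ext v; simp [hij]
    rw [h2]
    exact MeasurableSet.univ

lemma combo_eq_preimage {Ω : Type*} (X : ℕ → Ω → ℝ) (m c j N : ℕ) (w : ℤ) :
    ((⋂ i ∈ Finset.range j, X (c + i) ⁻¹' {(1:ℝ)}) ∩ walkSet X m (c + j) N w)
      = (fun ω (i : Fin (j + N)) => X (c + i) ω) ⁻¹' onesCyl m j N w := by
  rw [onesCyl, Set.preimage_inter]
  congr 1
  · ext ω
    simp only [Set.mem_iInter, Set.mem_preimage, Set.mem_singleton_iff, Finset.mem_range,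
      Set.mem_setOf_eq]
    constructor
    · intro h i hi; exact h i hi
    · intro h i hi; exact h ⟨i, by omega⟩ hi
  · rw [← Set.preimage_comp]
    have hcomp : dropFirst j N ∘ (fun ω (i : Fin (j + N)) => X (c + i) ω)
        = fun ω (i : Fin N) => X (c + j + i) ω := by
      funext ω i
      show X (c + (j + i)) ω = X (c + j + i) ω
      rw [Nat.add_assoc]
    rw [hcomp, walkSet_eq_preimage]

lemma prefix_ones_bound (hmeas : ∀ i, Measurable (X i))
    (hindep : iIndepFun X P)
    (hbern : ∀ i, Measure.map (X i) P
      = ENNReal.ofReal μ • Measure.dirac (1 : ℝ) + ENNReal.ofReal (1 - μ) • Measure.dirac (0 : ℝ))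
    (m : ℕ) : ∀ (j k N : ℕ) (w : ℤ),
      P ((⋂ i ∈ Finset.range j, X (k + i) ⁻¹' {(1:ℝ)}) ∩ walkSet X m (k + j) N w)
        = (ENNReal.ofReal μ) ^ j * P (walkSet X m (k + j) N w) := by
  intro j
  induction j with
  | zero =>
    intro k N w
    simp
  | succ j ih =>
    intro k N w
    have hsplit : (⋂ i ∈ Finset.range (j+1), X (k + i) ⁻¹' {(1:ℝ)})
        = X k ⁻¹' {(1:ℝ)} ∩ ⋂ i ∈ Finset.range j, X (k + 1 + i) ⁻¹' {(1:ℝ)} := by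
      ext ω
      simp only [Set.mem_iInter, Set.mem_inter_iff, Set.mem_preimage, Set.mem_singleton_iff,
        Finset.mem_range]
      constructor
      · intro h
        refine ⟨by simpa using h 0 (Nat.succ_pos j), fun i hi => ?_⟩
        have h2 := h (i+1) (by omega)
        rwa [show k + (i+1) = k + 1 + i by omega] at h2
      · rintro ⟨h0, h1⟩ i hi
        rcases Nat.eq_zero_or_pos i with rfl | hip
        · simpa using h0
        · obtain ⟨i', rfl⟩ : ∃ i', i = i' + 1 := ⟨i - 1, by omega⟩
          have h2 := h1 i' (by omega)
          rwa [show k + 1 + i' = k + (i' + 1) by omega] at h2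
    have hkj : k + (j + 1) = (k + 1) + j := by omega
    rw [hsplit, Set.inter_assoc, hkj, combo_eq_preimage X m (k+1) j N w,
      measure_inter_eq hmeas hindep k (j + N) (measurableSet_singleton 1)
        (measurableSet_onesCyl m j N w),
      ← combo_eq_preimage X m (k+1) j N w, prob_one hmeas hbern k, ih (k+1) N w]
    ring

lemma event_incl {Ω : Type*} (X : ℕ → Ω → ℝ) (m : ℕ) (θ : ℝ) (hm4 : 4 ≤ m)
    (hθm : θ ≤ 1 - 1 / m) (ω : Ω)
    (hones : ∀ i ∈ Finset.range m, X i ω = 1)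
    (hwalk : ∀ N, ω ∈ walkSet X m m N (m : ℤ))
    (hval : ∀ i, X i ω = 0 ∨ X i ω = 1) :
    ∀ n : ℕ, 1 ≤ n → θ < (∑ i ∈ Finset.range n, X i ω) / n := by
  intro n hn
  have hm4R : (4:ℝ) ≤ m := by exact_mod_cast hm4
  have hm0 : (0:ℝ) < m := by linarith
  have hn0 : (0:ℝ) < n := by exact_mod_cast hn
  have hinvm : (0:ℝ) < 1 / m := by positivity
  rw [lt_div_iff₀ hn0]
  by_cases hnm : n ≤ m
  · have hsum : ∑ i ∈ Finset.range n, X i ω = n := by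
      have : ∀ i ∈ Finset.range n, X i ω = 1 := fun i hi =>
        hones i (Finset.mem_range.2 (lt_of_lt_of_le (Finset.mem_range.1 hi) hnm))
      rw [Finset.sum_congr rfl this, Finset.sum_const, Finset.card_range, nsmul_eq_mul, mul_one]
    rw [hsum]
    nlinarith
  · push_neg at hnm
    obtain ⟨j, rfl⟩ : ∃ j, n = m + j := ⟨n - m, by omega⟩
    have hj1 : 1 ≤ j := by omega
    have hj0 : (0:ℝ) < j := by exact_mod_cast hj1
    have hw := hwalk j j (Finset.mem_Icc.2 ⟨hj1, le_refl j⟩)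
    -- identify the walk sum with the real sum
    have hstep : ∀ i ∈ Finset.range j, step m (X (m + i) ω)
        = m * X (m + i) ω - ((m:ℝ) - 1) := by
      intro i _
      rcases hval (m + i) with h0 | h1
      · rw [step, if_neg (by rw [h0]; norm_num), h0]; ring
      · rw [step, if_pos h1, h1]; ring
    have hsum2 : ∑ i ∈ Finset.range j, step m (X (m + i) ω)
        = m * (∑ i ∈ Finset.range j, X (m + i) ω) - ((m:ℝ) - 1) * j := by
      rw [Finset.sum_congr rfl hstep, Finset.sum_sub_distrib, ← Finset.mul_sum,
        Finset.sum_const, Finset.card_range, nsmul_eq_mul]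
      ring
    have hsplit : ∑ i ∈ Finset.range (m + j), X i ω
        = (m:ℝ) + ∑ i ∈ Finset.range j, X (m + i) ω := by
      rw [Finset.sum_range_add]
      congr 1
      have : ∀ i ∈ Finset.range m, X i ω = 1 := hones
      rw [Finset.sum_congr rfl this, Finset.sum_const, Finset.card_range, nsmul_eq_mul, mul_one]
    set S' := ∑ i ∈ Finset.range j, X (m + i) ω with hS'
    rw [hsplit]
    -- from the walk condition
    have hw2 : (0:ℝ) < (m:ℝ) + (m * S' - ((m:ℝ) - 1) * j) := by
      rw [← hsum2]
      exact_mod_cast hw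
    have hnc : ((m + j : ℕ):ℝ) = (m:ℝ) + (j:ℝ) := by push_cast; ring
    have hθ' : θ * m ≤ (m:ℝ) - 1 := by
      have h1 : (1 - 1/(m:ℝ)) * m = (m:ℝ) - 1 := by field_simp
      nlinarith
    have hkey : ((m:ℝ) - 1) * ((m:ℝ) + j) < m * ((m:ℝ) + S') := by nlinarith
    have h2 : θ * m * ((m:ℝ) + j) ≤ ((m:ℝ) - 1) * ((m:ℝ) + j) :=
      mul_le_mul_of_nonneg_right hθ' (by positivity)
    have h3 : m * (θ * ((m + j:ℕ):ℝ)) < m * ((m:ℝ) + S') := by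
      rw [hnc]; nlinarith
    exact (mul_lt_mul_iff_right₀ hm0).mp h3

end Stmt3Aux

set_option maxHeartbeats 1000000 in
open Stmt3Aux in
theorem stmt_3 {Ω : Type*} [MeasurableSpace Ω] (P : Measure Ω) [IsProbabilityMeasure P]
    (X : ℕ → Ω → ℝ) (μ θ : ℝ) (m : ℕ)
    (hmeas : ∀ i, Measurable (X i))
    (hindep : iIndepFun X P)
    (hbern : ∀ i, Measure.map (X i) P
      = ENNReal.ofReal μ • Measure.dirac (1 : ℝ) + ENNReal.ofReal (1 - μ) • Measure.dirac (0 : ℝ))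
    (hμ1 : μ ≤ 1)
    (hθ : 2 / 3 < θ) (hm4 : 4 ≤ m)
    (hm1 : 1 / (m : ℝ) ≤ 1 - θ) (hm2 : 1 - θ < 1 / ((m : ℝ) - 1))
    (hμ : (1 + θ) / 2 ≤ μ) :
    ENNReal.ofReal (Real.exp (-(1 / 2)) / 3)
      ≤ P {ω | ∀ n : ℕ, 1 ≤ n → θ < (∑ i ∈ range n, X i ω) / n} := by
  classical
  -- ## basic real facts
  have hm4R : (4:ℝ) ≤ m := by exact_mod_cast hm4
  have hmR : (0:ℝ) < m := by linarith
  have hm1R : (1:ℝ) < (m:ℝ) - 1 := by linarith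
  have hθ1 : θ ≤ 1 - 1/(m:ℝ) := by linarith
  have hp0 : (0:ℝ) ≤ 1 - μ := by linarith
  have hμ0 : (0:ℝ) ≤ μ := by linarith
  have hpq : 1 - μ ≤ 1/(2*((m:ℝ)-1)) := by
    have h1 : 1 - μ ≤ (1-θ)/2 := by linarith
    have h2 : (1-θ)/2 < (1/((m:ℝ)-1))/2 := by linarith
    have h3 : (1/((m:ℝ)-1))/2 = 1/(2*((m:ℝ)-1)) := by
      rw [div_div]; ring_nf
    linarith
  obtain ⟨s, hs⟩ : ∃ s : ℝ, s = 1 + 3/(4*(m:ℝ)) := ⟨_, rfl⟩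
  have hsgap : (0:ℝ) < 3/(4*(m:ℝ)) := by positivity
  have hs1 : 1 < s := by rw [hs]; linarith
  have hs0 : (0:ℝ) < s := by linarith
  -- ## s^m ≤ 17/8
  have hsm178 : s^m ≤ 17/8 := by
    have h1 : s ≤ Real.exp (3/(4*(m:ℝ))) := by
      have := Real.add_one_le_exp (3/(4*(m:ℝ)))
      rw [hs]; linarith
    have h2 : s^m ≤ Real.exp (3/(4*(m:ℝ)))^m := pow_le_pow_left₀ hs0.le h1 m
    have h3 : Real.exp (3/(4*(m:ℝ)))^m = Real.exp ((m:ℝ) * (3/(4*(m:ℝ)))) :=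
      (Real.exp_nat_mul _ m).symm
    have h4 : (m:ℝ) * (3/(4*(m:ℝ))) = 3/4 := by field_simp
    have h5 : Real.exp ((3:ℝ)/4) ≤ 17/8 := by
      have he : Real.exp 1 < 2.7182818286 := Real.exp_one_lt_d9
      have hp4 : Real.exp ((3:ℝ)/4) ^ (4:ℕ) = Real.exp 3 := by
        rw [← Real.exp_nat_mul]; norm_num
      have he3 : Real.exp (3:ℝ) = (Real.exp 1)^(3:ℕ) := by
        rw [← Real.exp_nat_mul]; norm_num
      refine le_of_pow_le_pow_left₀ (by norm_num : (4:ℕ) ≠ 0) (by norm_num) ?_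
      rw [hp4, he3]
      have h15 : Real.exp 1 ^ (3:ℕ) ≤ (2.7182818286:ℝ)^(3:ℕ) :=
        pow_le_pow_left₀ (Real.exp_pos 1).le he.le 3
      refine le_trans h15 (by norm_num)
    rw [h3, h4] at h2
    linarith
  have hsm1 : (1:ℝ) ≤ s^m := one_le_pow₀ hs1.le
  have hsmu : (0:ℝ) < s - μ := by rw [hs]; linarith
  -- ## the gambler's-ruin constraint
  have hcon : (1-μ) * s^m ≤ s - μ := by
    have h6 : (1-μ)*(s^m - 1) ≤ (1/(2*((m:ℝ)-1))) * (9/8) :=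
      mul_le_mul hpq (by linarith) (by linarith) (by positivity)
    have h7 : (1:ℝ)/(2*((m:ℝ)-1)) * (9/8) ≤ 3/(4*(m:ℝ)) := by
      rw [div_mul_eq_mul_div, div_le_div_iff₀ (by linarith) (by positivity)]
      nlinarith
    have hseq : s - μ = 3/(4*(m:ℝ)) + (1 - μ) := by rw [hs]; ring
    have hexp : (1-μ)*(s^m-1) = (1-μ)*s^m - (1-μ) := by ring
    rw [hexp] at h6
    linarith
  obtain ⟨A, hA⟩ : ∃ A : ℝ, A = (1-μ) * s^m / (s - μ) := ⟨_, rfl⟩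
  have hA0 : 0 ≤ A := by
    rw [hA]
    exact div_nonneg (mul_nonneg hp0 (by positivity)) hsmu.le
  have hA1 : A ≤ 1 := by
    rw [hA]
    exact (div_le_one hsmu).2 hcon
  have hAge : (1-μ) * s^m ≤ A * (s - μ) := by
    rw [hA]
    exact le_of_eq (div_mul_cancel₀ _ hsmu.ne').symm
  have hconW : μ + (1 - μ) * s^m ≤ s := by linarith
  -- ## lower bound for φ(m) = 1 - A s^{-m}
  have hsminv : s^(-(m:ℤ)) = (s^m)⁻¹ := by rw [zpow_neg, zpow_natCast]
  have hAs : A * s^(-(m:ℤ)) = (1-μ) / (s - μ) := by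
    rw [hsminv, hA]
    field_simp
  have h5m3 : (0:ℝ) < 5*(m:ℝ)-3 := by linarith
  have hφm : 3*((m:ℝ)-1)/(5*(m:ℝ)-3) ≤ 1 - A * s^(-(m:ℤ)) := by
    rw [hAs]
    have hd1 : ((m:ℝ)-1) ≠ 0 := by linarith
    have hd2 : (m:ℝ) ≠ 0 := by linarith
    have hq0 : (0:ℝ) < 1/(2*((m:ℝ)-1)) := by positivity
    have h8 : (1-μ)/(s-μ) ≤ (1/(2*((m:ℝ)-1)))/(3/(4*(m:ℝ)) + 1/(2*((m:ℝ)-1))) := by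
      rw [div_le_div_iff₀ hsmu (by positivity),
        show s - μ = 3/(4*(m:ℝ)) + (1 - μ) by rw [hs]; ring]
      nlinarith [mul_le_mul_of_nonneg_right hpq hsgap.le]
    have h9 : (1/(2*((m:ℝ)-1)))/(3/(4*(m:ℝ)) + 1/(2*((m:ℝ)-1)))
        = 1 - 3*((m:ℝ)-1)/(5*(m:ℝ)-3) := by
      have h5m3' : (5*(m:ℝ)-3) ≠ 0 := h5m3.ne'
      have h4m : 4*(m:ℝ)*((m:ℝ)-1) ≠ 0 := mul_ne_zero (mul_ne_zero four_ne_zero hd2) hd1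
      have h3 : 3/(4*(m:ℝ)) + 1/(2*((m:ℝ)-1)) = (5*(m:ℝ)-3)/(4*(m:ℝ)*((m:ℝ)-1)) := by
        field_simp; ring
      have h2m : 1/(2*((m:ℝ)-1)) * (4*(m:ℝ)*((m:ℝ)-1)) = 2*(m:ℝ) := by
        rw [div_mul_eq_mul_div, one_mul, div_eq_iff (mul_ne_zero two_ne_zero hd1)]; ring
      rw [h3, div_div_eq_mul_div, h2m, eq_sub_iff_add_eq, ← add_div,
        div_eq_one_iff_eq h5m3']
      ring
    rw [h9] at h8
    linarith
  have hφm0 : (0:ℝ) ≤ 3*((m:ℝ)-1)/(5*(m:ℝ)-3) := by positivity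
  -- ## lower bound for μ^m
  have h2m3 : (0:ℝ) < 2*(m:ℝ)-3 := by linarith
  have hq1 : 1/(2*((m:ℝ)-1)) < 1 := by
    rw [div_lt_one (by linarith)]; linarith
  have hexp1 : Real.exp (-(1/(2*(m:ℝ)-3))) ≤ 1 - 1/(2*((m:ℝ)-1)) := by
    have ha : (0:ℝ) < 1/(2*(m:ℝ)-3) := by positivity
    have h10 := Real.add_one_le_exp (1/(2*(m:ℝ)-3))
    have h11 : (1 - 1/(2*((m:ℝ)-1))) * (1 + 1/(2*(m:ℝ)-3)) = 1 := by
      field_simp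
      ring
    rw [Real.exp_neg]
    calc (Real.exp (1/(2*(m:ℝ)-3)))⁻¹
        ≤ (1 + 1/(2*(m:ℝ)-3))⁻¹ := by
          apply inv_anti₀ (by positivity) (by linarith)
      _ = 1 - 1/(2*((m:ℝ)-1)) := inv_eq_of_mul_eq_one_left h11
  have hexp2 : Real.exp (-(1/(2*(m:ℝ)-3)))^m = Real.exp (-((m:ℝ)/(2*(m:ℝ)-3))) := by
    rw [← Real.exp_nat_mul]
    congr 1
    ring
  have hμq : 1 - 1/(2*((m:ℝ)-1)) ≤ μ := by linarith
  have hμm : Real.exp (-((m:ℝ)/(2*(m:ℝ)-3))) ≤ μ^m := by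
    calc Real.exp (-((m:ℝ)/(2*(m:ℝ)-3))) = Real.exp (-(1/(2*(m:ℝ)-3)))^m := hexp2.symm
      _ ≤ (1 - 1/(2*((m:ℝ)-1)))^m := pow_le_pow_left₀ (Real.exp_pos _).le hexp1 m
      _ ≤ μ^m := pow_le_pow_left₀ (by linarith) hμq m
  -- ## final numeric inequality
  have hfinal : Real.exp (-(1/2))/3 ≤ μ^m * (1 - A * s^(-(m:ℤ))) := by
    have hE : Real.exp (-((m:ℝ)/(2*(m:ℝ)-3))) * Real.exp ((m:ℝ)/(2*(m:ℝ)-3) - 1/2)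
        = Real.exp (-(1/2:ℝ)) := by
      rw [← Real.exp_add]; congr 1; ring
    have hc1 : (m:ℝ)/(2*(m:ℝ)-3) - 1/2 ≤ 1/3 := by
      have h12 : (m:ℝ)/(2*(m:ℝ)-3) ≤ 5/6 := by
        rw [div_le_iff₀ h2m3]; linarith
      linarith
    have hc2 : Real.exp ((m:ℝ)/(2*(m:ℝ)-3) - 1/2) ≤ 27/17 := by
      calc Real.exp ((m:ℝ)/(2*(m:ℝ)-3) - 1/2) ≤ Real.exp (1/3:ℝ) := Real.exp_le_exp.2 hc1
        _ ≤ 27/17 := by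
          have h13 : Real.exp ((1:ℝ)/3) ^ (3:ℕ) = Real.exp 1 := by
            rw [← Real.exp_nat_mul]; norm_num
          have he := Real.exp_one_lt_d9
          refine le_of_pow_le_pow_left₀ (by norm_num : (3:ℕ) ≠ 0) (by norm_num) ?_
          rw [h13]
          nlinarith [Real.exp_pos 1]
    have hc3 : (27:ℝ)/17 ≤ 9*((m:ℝ)-1)/(5*(m:ℝ)-3) := by
      rw [div_le_div_iff₀ (by norm_num) h5m3]
      linarith
    have hc4 : Real.exp (-(1/2:ℝ))
        ≤ Real.exp (-((m:ℝ)/(2*(m:ℝ)-3))) * (9*((m:ℝ)-1)/(5*(m:ℝ)-3)) := by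
      rw [← hE]
      exact mul_le_mul_of_nonneg_left (hc2.trans hc3) (Real.exp_pos _).le
    have hprod : Real.exp (-((m:ℝ)/(2*(m:ℝ)-3))) * (3*((m:ℝ)-1)/(5*(m:ℝ)-3))
        ≤ μ^m * (1 - A * s^(-(m:ℤ))) :=
      mul_le_mul hμm hφm hφm0 (by positivity)
    have h14 : Real.exp (-((m:ℝ)/(2*(m:ℝ)-3))) * (9*((m:ℝ)-1)/(5*(m:ℝ)-3)) / 3
        = Real.exp (-((m:ℝ)/(2*(m:ℝ)-3))) * (3*((m:ℝ)-1)/(5*(m:ℝ)-3)) := by ring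
    linarith
  -- ## probability assembly
  have hmZ : (1:ℤ) ≤ (m:ℤ) := by exact_mod_cast (by omega : 1 ≤ m)
  have key : ∀ N : ℕ, ENNReal.ofReal (μ^m * (1 - A * s^(-(m:ℤ))))
      ≤ P ((⋂ i ∈ Finset.range m, X i ⁻¹' {(1:ℝ)}) ∩ walkSet X m m N (m:ℤ)) := by
    intro N
    have h1 := prefix_ones_bound hmeas hindep hbern m m 0 N (m:ℤ)
    simp only [Nat.zero_add] at h1
    have h2 := walk_bound hmeas hindep hbern m s A hμ0 hμ1 hs1 hA0 hA1 hconW hAge N m (m:ℤ) hmZ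
    calc ENNReal.ofReal (μ^m * (1 - A * s^(-(m:ℤ))))
        = (ENNReal.ofReal μ)^m * ENNReal.ofReal (1 - A * s^(-(m:ℤ))) := by
          rw [ENNReal.ofReal_mul (by positivity), ENNReal.ofReal_pow hμ0]
      _ ≤ (ENNReal.ofReal μ)^m * P (walkSet X m m N (m:ℤ)) := mul_le_mul_right h2 _
      _ = P ((⋂ i ∈ Finset.range m, X i ⁻¹' {(1:ℝ)}) ∩ walkSet X m m N (m:ℤ)) := h1.symm
  set Dinf : Set Ω :=
    ⋂ N : ℕ, ((⋂ i ∈ Finset.range m, X i ⁻¹' {(1:ℝ)}) ∩ walkSet X m m N (m:ℤ)) with hD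
  have hmono : Antitone (fun N => (⋂ i ∈ Finset.range m, X i ⁻¹' {(1:ℝ)})
      ∩ walkSet X m m N (m:ℤ)) := by
    intro N1 N2 h
    apply Set.inter_subset_inter_right
    intro ω hω n hn
    rw [Finset.mem_Icc] at hn
    exact hω n (Finset.mem_Icc.2 ⟨hn.1, le_trans hn.2 h⟩)
  have hPDinf : P Dinf = ⨅ N, P ((⋂ i ∈ Finset.range m, X i ⁻¹' {(1:ℝ)})
      ∩ walkSet X m m N (m:ℤ)) := by
    rw [hD]
    refine Antitone.measure_iInter hmono (fun N => ?_) ⟨0, measure_ne_top P _⟩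
    exact ((MeasurableSet.biInter (Finset.range m).countable_toSet
      (fun i _ => (hmeas i) (measurableSet_singleton 1))).inter
      (measurableSet_walkSet X hmeas m m N _)).nullMeasurableSet
  have hclow : ENNReal.ofReal (μ^m * (1 - A * s^(-(m:ℤ)))) ≤ P Dinf := by
    rw [hPDinf]
    exact le_iInf key
  set G : Set Ω := ⋂ i : ℕ, X i ⁻¹' ({0,1} : Set ℝ) with hG
  have hGc : P Gᶜ = 0 := by
    rw [hG, Set.compl_iInter]
    refine measure_iUnion_null fun i => ?_
    rw [← Set.preimage_compl]
    exact prob_vals hmeas hbern i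
  have hPDG : P (Dinf ∩ G) = P Dinf := measure_inter_conull hGc
  have hincl : Dinf ∩ G ⊆ {ω | ∀ n : ℕ, 1 ≤ n → θ < (∑ i ∈ range n, X i ω) / n} := by
    rintro ω ⟨hω1, hω2⟩
    rw [hD] at hω1
    simp only [Set.mem_iInter, Set.mem_inter_iff, Set.mem_preimage,
      Set.mem_singleton_iff] at hω1
    rw [hG] at hω2
    simp only [Set.mem_iInter, Set.mem_preimage, Set.mem_insert_iff,
      Set.mem_singleton_iff] at hω2
    have hones : ∀ i ∈ Finset.range m, X i ω = 1 := fun i hi => (hω1 0).1 i hi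
    have hwalk : ∀ N, ω ∈ walkSet X m m N (m:ℤ) := fun N => (hω1 N).2
    exact event_incl X m θ hm4 hθ1 ω hones hwalk hω2
  calc ENNReal.ofReal (Real.exp (-(1/2))/3)
      ≤ ENNReal.ofReal (μ^m * (1 - A * s^(-(m:ℤ)))) := ENNReal.ofReal_le_ofReal hfinal
    _ ≤ P Dinf := hclow
    _ = P (Dinf ∩ G) := hPDG.symm
    _ ≤ P {ω | ∀ n : ℕ, 1 ≤ n → θ < (∑ i ∈ range n, X i ω) / n} := measure_mono hincl
end

section
/- Let Z be the random variable θ - B where B ∼ Bernoulli(μ), θ = 1 - 1/m with integer m ≥ 2 and θ < μ < 1. Let γ > 0 be the nonzero solution of E[exp(γ Z)] = 1. Then (m/(m-1))·log(μ/((1-μ)(m-1))) ≤ γ ≤ (2m/(m-1))·log(μ/((1-μ)(m-1))). -/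
set_option maxHeartbeats 1000000

lemma exp_pair_aux (a b : ℝ) : 2 * Real.exp ((a + b) / 2) ≤ Real.exp a + Real.exp b := by
  have key : 0 ≤ (Real.exp (a/2) - Real.exp (b/2))^2 := sq_nonneg _
  have ea : Real.exp (a/2) * Real.exp (a/2) = Real.exp a := by
    rw [← Real.exp_add]; ring_nf
  have eb : Real.exp (b/2) * Real.exp (b/2) = Real.exp b := by
    rw [← Real.exp_add]; ring_nf
  have eab : Real.exp (a/2) * Real.exp (b/2) = Real.exp ((a+b)/2) := by
    rw [← Real.exp_add]; ring_nf
  nlinarith [key, ea, eb, eab]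

theorem stmt_4 (μ θ γ : ℝ) (m : ℕ) (hm : 2 ≤ m)
    (hθ : θ = 1 - 1 / (m : ℝ)) (hθμ : θ < μ) (hμ1 : μ < 1)
    (hγ : 0 < γ)
    (hlund : μ * Real.exp (γ * (θ - 1)) + (1 - μ) * Real.exp (γ * θ) = 1) :
    ((m : ℝ) / ((m : ℝ) - 1)) * Real.log (μ / ((1 - μ) * ((m : ℝ) - 1))) ≤ γ ∧
    γ ≤ (2 * (m : ℝ) / ((m : ℝ) - 1)) * Real.log (μ / ((1 - μ) * ((m : ℝ) - 1))) := by
  have hmR : (2:ℝ) ≤ (m:ℝ) := by exact_mod_cast hm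
  have hm0 : (0:ℝ) < m := by linarith
  have hc : (0:ℝ) < (m:ℝ) - 1 := by linarith
  have hm1 : 1 ≤ m := by omega
  have hcast : ((m - 1 : ℕ) : ℝ) = (m:ℝ) - 1 := by push_cast [hm1]; ring
  set t : ℝ := γ / m with ht
  have htpos : 0 < t := div_pos hγ hm0
  set x : ℝ := Real.exp t with hx
  have hx1 : 1 < x := by
    rw [hx]
    calc (1:ℝ) = Real.exp 0 := Real.exp_zero.symm
      _ < Real.exp t := Real.exp_lt_exp.mpr htpos
  have hx0 : 0 < x := by linarith
  have hμ0 : 0 < μ := by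
    have h14 : 1 / (m:ℝ) ≤ 1 / 2 := by
      apply div_le_div_of_nonneg_left <;> linarith
    have hθpos : 0 < θ := by rw [hθ]; linarith
    linarith
  have h1μ : 0 < 1 - μ := by linarith
  -- rewrite the Lundberg equation
  have hθ1 : γ * (θ - 1) = -t := by rw [hθ, ht]; field_simp; ring
  have hθ2 : γ * θ = ((m - 1 : ℕ) : ℝ) * t := by
    rw [hθ, ht, hcast]; field_simp
  rw [hθ1, hθ2, Real.exp_nat_mul, ← hx, Real.exp_neg, ← hx] at hlund
  have hE : μ + (1 - μ) * x ^ m = x := by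
    have := congrArg (· * x) hlund
    simp only [add_mul, one_mul] at this
    rw [mul_assoc, mul_assoc, inv_mul_cancel₀ (ne_of_gt hx0), mul_one,
      ← pow_succ] at this
    rwa [Nat.sub_add_cancel hm1] at this
  -- geometric sum identity
  have hgeom : (∑ i ∈ Finset.range m, x ^ i) * (x - 1) = x ^ m - 1 := geom_sum_mul x m
  have hS0 : (1 - μ) * (∑ i ∈ Finset.range m, x ^ i) = 1 := by
    have hxm : (1 - μ) * (x ^ m - 1) = x - 1 := by nlinarith [hE]
    have hx1' : x - 1 ≠ 0 := by linarith
    have h2 : ((1 - μ) * ∑ i ∈ Finset.range m, x ^ i) * (x - 1) = 1 * (x - 1) := by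
      rw [one_mul]
      linear_combination (1 - μ) * hgeom + hxm
    exact mul_right_cancel₀ hx1' h2
  have hsplit : (∑ i ∈ Finset.range m, x ^ i)
      = 1 + ∑ i ∈ Finset.Ico 1 m, x ^ i := by
    rw [Finset.range_eq_Ico, Finset.sum_eq_sum_Ico_succ_bot (by omega : 0 < m)]
    simp
  set S : ℝ := ∑ i ∈ Finset.Ico 1 m, x ^ i with hSdef
  have hSμ : (1 - μ) * S = μ := by rw [hsplit] at hS0; ring_nf at hS0 ⊢; linarith
  set R : ℝ := μ / ((1 - μ) * ((m:ℝ) - 1)) with hR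
  have hR0 : 0 < R := div_pos hμ0 (mul_pos h1μ hc)
  have hR1 : 1 < R := by
    rw [hR, lt_div_iff₀ (mul_pos h1μ hc)]
    have hθm : θ = ((m:ℝ) - 1) / m := by rw [hθ]; field_simp
    have h1 : ((m:ℝ) - 1) / m < μ := by rw [← hθm]; exact hθμ
    have hmu : (m:ℝ) - 1 < μ * m := (div_lt_iff₀ hm0).mp h1
    nlinarith [hmu]
  have hlogR : 0 < Real.log R := Real.log_pos hR1
  -- lower bound: S ≤ (m-1) x^(m-1)
  have hSle : S ≤ ((m:ℝ) - 1) * x ^ (m - 1) := by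
    have : S ≤ (Finset.Ico 1 m).card • x ^ (m - 1) := by
      apply Finset.sum_le_card_nsmul
      intro i hi
      rw [Finset.mem_Ico] at hi
      exact pow_le_pow_right₀ (le_of_lt hx1) (by omega)
    simpa [Nat.card_Ico, nsmul_eq_mul, hcast] using this
  have hlow : Real.log R ≤ ((m:ℝ) - 1) * t := by
    have hx_ge : R ≤ x ^ (m - 1) := by
      rw [hR, div_le_iff₀ (mul_pos h1μ hc)]
      nlinarith [hSμ, hSle]
    have hxpow : x ^ (m - 1) = Real.exp (((m:ℝ) - 1) * t) := by
      rw [hx, ← Real.exp_nat_mul, hcast]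
    rw [Real.log_le_iff_le_exp hR0, ← hxpow]
    exact hx_ge
  -- upper bound: (m-1) * exp(γ/2) ≤ S
  have hSge : ((m:ℝ) - 1) * Real.exp (γ / 2) ≤ S := by
    have hpair : ∀ j ∈ Finset.range (m - 1),
        2 * Real.exp (γ / 2) ≤ x ^ (1 + j) + x ^ (m - 1 - j) := by
      intro j hj
      rw [Finset.mem_range] at hj
      have e1 : x ^ (1 + j) = Real.exp (((1 + j : ℕ):ℝ) * t) := by
        rw [hx, ← Real.exp_nat_mul]
      have e2 : x ^ (m - 1 - j) = Real.exp (((m - 1 - j : ℕ):ℝ) * t) := by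
        rw [hx, ← Real.exp_nat_mul]
      have hsum : ((1 + j : ℕ):ℝ) * t + ((m - 1 - j : ℕ):ℝ) * t = γ := by
        have : ((1 + j : ℕ):ℝ) + ((m - 1 - j : ℕ):ℝ) = (m:ℝ) := by
          have : (1 + j) + (m - 1 - j) = m := by omega
          exact_mod_cast congrArg (Nat.cast : ℕ → ℝ) this
        rw [← add_mul, this, ht]; field_simp
      rw [e1, e2, show γ / 2 = (((1 + j : ℕ):ℝ) * t + ((m - 1 - j : ℕ):ℝ) * t) / 2 by rw [hsum]]
      exact exp_pair_aux _ _
    have hrange : S = ∑ j ∈ Finset.range (m - 1), x ^ (1 + j) := by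
      rw [hSdef, Finset.sum_Ico_eq_sum_range]
    have hrefl : S = ∑ j ∈ Finset.range (m - 1), x ^ (m - 1 - j) := by
      rw [hrange, ← Finset.sum_range_reflect]
      apply Finset.sum_congr rfl
      intro j hj
      rw [Finset.mem_range] at hj
      congr 1
      omega
    have h2S : 2 * S = ∑ j ∈ Finset.range (m - 1), (x ^ (1 + j) + x ^ (m - 1 - j)) := by
      rw [Finset.sum_add_distrib, ← hrange, ← hrefl]; ring
    have hsum_ge : ((m - 1 : ℕ):ℝ) * (2 * Real.exp (γ / 2)) ≤ 2 * S := by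
      rw [h2S]
      calc ((m - 1 : ℕ):ℝ) * (2 * Real.exp (γ / 2))
          = ∑ _j ∈ Finset.range (m - 1), 2 * Real.exp (γ / 2) := by
            rw [Finset.sum_const, Finset.card_range, nsmul_eq_mul]
        _ ≤ _ := Finset.sum_le_sum hpair
    rw [hcast] at hsum_ge
    nlinarith [hsum_ge]
  have hup : γ / 2 ≤ Real.log R := by
    rw [Real.le_log_iff_exp_le hR0, hR, le_div_iff₀ (mul_pos h1μ hc)]
    nlinarith [hSμ, hSge]
  constructor
  · rw [div_mul_eq_mul_div, div_le_iff₀ hc]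
    have : (m:ℝ) * Real.log R ≤ (m:ℝ) * (((m:ℝ) - 1) * t) :=
      mul_le_mul_of_nonneg_left hlow (le_of_lt hm0)
    have ht' : (m:ℝ) * t = γ := by rw [ht]; field_simp
    nlinarith [this]
  · have h2 : γ ≤ 2 * Real.log R := by linarith
    have : 2 * Real.log R ≤ (2 * (m:ℝ) / ((m:ℝ) - 1)) * Real.log R := by
      apply mul_le_mul_of_nonneg_right _ (le_of_lt hlogR)
      rw [le_div_iff₀ hc]; nlinarith
    linarith
end

section
/- Let x > 1 be real and m ≥ 2 an integer, and suppose x + x² + ⋯ + x^{m-1} = c where c > m-1. Then ((c/(m-1)))^{1/(m-1)} ≤ x ≤ (c/(m-1))^{2/(m-1)}. -/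
theorem stmt_5 (x c : ℝ) (m : ℕ) (hm : 2 ≤ m) (hx : 1 < x)
    (hc : ((m : ℝ) - 1) < c)
    (hsum : ∑ i ∈ Finset.Icc 1 (m - 1), x ^ i = c) :
    (c / ((m : ℝ) - 1)) ^ ((1 : ℝ) / ((m : ℝ) - 1)) ≤ x ∧
    x ≤ (c / ((m : ℝ) - 1)) ^ ((2 : ℝ) / ((m : ℝ) - 1)) := by
  have hm2 : (2:ℝ) ≤ (m:ℝ) := by exact_mod_cast hm
  have hd : (0:ℝ) < (m:ℝ) - 1 := by linarith
  have hx0 : (0:ℝ) < x := lt_trans one_pos hx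
  have hcd : 1 < c / ((m:ℝ) - 1) := (one_lt_div hd).2 hc
  have hcast : ((m - 1 : ℕ) : ℝ) = (m:ℝ) - 1 := by
    have := Nat.cast_sub (R := ℝ) (le_trans one_le_two hm)
    simpa using this
  constructor
  · -- lower bound
    have h1 : c ≤ ((m:ℝ) - 1) * x ^ (m - 1) := by
      rw [← hsum]
      calc ∑ i ∈ Finset.Icc 1 (m-1), x ^ i
          ≤ ∑ _i ∈ Finset.Icc 1 (m-1), x ^ (m-1) := by
            refine Finset.sum_le_sum fun i hi => ?_
            exact pow_le_pow_right₀ hx.le (Finset.mem_Icc.mp hi).2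
        _ = ((m:ℝ) - 1) * x ^ (m-1) := by
            rw [Finset.sum_const, Nat.card_Icc, nsmul_eq_mul]
            norm_num [hcast]
    have h2 : c / ((m:ℝ) - 1) ≤ x ^ ((m:ℝ) - 1) := by
      rw [div_le_iff₀ hd, ← hcast, Real.rpow_natCast, hcast]
      linarith [h1]
    calc (c / ((m:ℝ) - 1)) ^ ((1:ℝ) / ((m:ℝ) - 1))
        ≤ (x ^ ((m:ℝ) - 1)) ^ ((1:ℝ) / ((m:ℝ) - 1)) := by
          apply Real.rpow_le_rpow (by positivity) h2 (by positivity)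
      _ = x := by
          rw [← Real.rpow_mul hx0.le]
          rw [mul_one_div, div_self hd.ne', Real.rpow_one]
  · -- upper bound
    have hsqrt : Real.sqrt (x ^ m) = x ^ ((m:ℝ)/2) := by
      rw [Real.sqrt_eq_rpow, ← Real.rpow_natCast x m, ← Real.rpow_mul hx0.le]
      ring_nf
    have hre : ∑ i ∈ Finset.Icc 1 (m-1), x ^ (m - i)
        = ∑ i ∈ Finset.Icc 1 (m-1), x ^ i := by
      apply Finset.sum_nbij' (fun i => m - i) (fun j => m - j) <;>
        intro a ha <;> simp only [Finset.mem_Icc] at * <;>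
        first
          | omega
          | (congr 1; omega)
    have key : ((m:ℝ) - 1) * (2 * x ^ ((m:ℝ)/2)) ≤ 2 * c := by
      calc ((m:ℝ) - 1) * (2 * x ^ ((m:ℝ)/2))
          = ∑ _i ∈ Finset.Icc 1 (m-1), 2 * x ^ ((m:ℝ)/2) := by
            rw [Finset.sum_const, Nat.card_Icc, nsmul_eq_mul]
            norm_num [hcast]
        _ ≤ ∑ i ∈ Finset.Icc 1 (m-1), (x ^ i + x ^ (m - i)) := by
            refine Finset.sum_le_sum fun i hi => ?_
            have hi' := Finset.mem_Icc.mp hi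
            have hxm : x ^ i * x ^ (m - i) = x ^ m := by
              rw [← pow_add]; congr 1; omega
            have h2ab := two_mul_le_add_sq (Real.sqrt (x ^ i)) (Real.sqrt (x ^ (m - i)))
            rw [Real.sq_sqrt (by positivity), Real.sq_sqrt (by positivity), mul_assoc,
              ← Real.sqrt_mul (by positivity), hxm, hsqrt] at h2ab
            linarith
        _ = 2 * c := by
            rw [Finset.sum_add_distrib, hre, hsum]; ring
    have h3 : x ^ ((m:ℝ)/2) ≤ c / ((m:ℝ) - 1) := by
      rw [le_div_iff₀ hd]
      nlinarith
    calc x = (x ^ ((m:ℝ)/2)) ^ ((2:ℝ)/(m:ℝ)) := by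
          rw [← Real.rpow_mul hx0.le]
          rw [show (m:ℝ)/2 * (2/(m:ℝ)) = 1 by field_simp, Real.rpow_one]
      _ ≤ (c / ((m:ℝ) - 1)) ^ ((2:ℝ)/(m:ℝ)) :=
          Real.rpow_le_rpow (by positivity) h3 (by positivity)
      _ ≤ (c / ((m:ℝ) - 1)) ^ ((2:ℝ)/((m:ℝ)-1)) := by
          apply Real.rpow_le_rpow_of_exponent_le hcd.le
          gcongr
          linarith
end

section
/- For any real x > 0 and any s with 0 < s < 1, x^{1-s} ≤ Γ(x+1)/Γ(x+s) ≤ (x+1)^{1-s}, where Γ denotes the Gamma function. -/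
open Real

theorem stmt_11 (x s : ℝ) (hx : 0 < x) (hs0 : 0 < s) (hs1 : s < 1) :
    x ^ (1 - s) ≤ Real.Gamma (x + 1) / Real.Gamma (x + s) ∧
    Real.Gamma (x + 1) / Real.Gamma (x + s) ≤ (x + 1) ^ (1 - s) := by
  have hΓx : 0 < Gamma x := Gamma_pos_of_pos hx
  have hΓxs : 0 < Gamma (x + s) := Gamma_pos_of_pos (by linarith)
  have hΓx1 : 0 < Gamma (x + 1) := Gamma_pos_of_pos (by linarith)
  have hconv := Real.convexOn_log_Gamma.2
  constructor
  · -- log Γ(x+s) ≤ (1-s) log Γ x + s log Γ (x+1)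
    have h := hconv (Set.mem_Ioi.mpr hx) (Set.mem_Ioi.mpr (by linarith : (0:ℝ) < x + 1))
      (by linarith : (0:ℝ) ≤ 1 - s) hs0.le (by ring)
    simp only [smul_eq_mul, Function.comp_apply] at h
    have hc : (1 - s) * x + s * (x + 1) = x + s := by ring
    rw [hc] at h
    have hgx : Gamma x = Gamma (x + 1) / x := by
      rw [Gamma_add_one hx.ne']; field_simp
    rw [hgx, log_div hΓx1.ne' hx.ne'] at h
    have h2 : log (Gamma (x + s)) ≤ log (Gamma (x + 1) / x ^ (1 - s)) := by
      rw [log_div hΓx1.ne' (rpow_pos_of_pos hx _).ne', log_rpow hx]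
      linarith
    have h3 := (log_le_log_iff hΓxs (by positivity)).mp h2
    rw [le_div_iff₀ hΓxs]
    calc x ^ (1 - s) * Gamma (x + s) ≤ x ^ (1 - s) * (Gamma (x + 1) / x ^ (1 - s)) := by
          exact mul_le_mul_of_nonneg_left h3 (by positivity)
      _ = Gamma (x + 1) := by field_simp
  · -- log Γ(x+1) ≤ s log Γ(x+s) + (1-s) log Γ(x+s+1)
    have h := hconv (Set.mem_Ioi.mpr (by linarith : (0:ℝ) < x + s))
      (Set.mem_Ioi.mpr (by linarith : (0:ℝ) < x + s + 1))
      hs0.le (by linarith : (0:ℝ) ≤ 1 - s) (by ring)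
    simp only [smul_eq_mul, Function.comp_apply] at h
    have hc : s * (x + s) + (1 - s) * (x + s + 1) = x + 1 := by ring
    rw [hc] at h
    have hgs : Gamma (x + s + 1) = (x + s) * Gamma (x + s) :=
      Gamma_add_one (by linarith)
    rw [hgs, log_mul (by linarith) hΓxs.ne'] at h
    have h2 : log (Gamma (x + 1)) ≤ log (Gamma (x + s) * (x + s) ^ (1 - s)) := by
      rw [log_mul hΓxs.ne' (rpow_pos_of_pos (by linarith) _).ne',
        log_rpow (by linarith)]
      linarith
    have h3 := (log_le_log_iff hΓx1 (by positivity)).mp h2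
    rw [div_le_iff₀ hΓxs]
    calc Gamma (x + 1) ≤ Gamma (x + s) * (x + s) ^ (1 - s) := h3
      _ ≤ Gamma (x + s) * (x + 1) ^ (1 - s) := by
          gcongr <;> linarith
      _ = (x + 1) ^ (1 - s) * Gamma (x + s) := by ring
end

section
/- Let μ₁, …, μₘ be i.i.d. random variables distributed according to a distribution Γ on [0,1] satisfying P_Γ[μ > 1-ε] ≥ c₀ε for all ε ∈ (0,1]. Let θ = log(T)/(m·c₀) for T ≥ 1 with θ ≤ 1. Then P[max_{i=1}^m μᵢ < 1-θ] ≤ 1/T, and consequently T·(1 - E[max_{i=1}^m μᵢ]) ≤ 1 + T·θ = 1 + √T·log(T)/c₀ when m = ⌈√T⌉. -/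
open MeasureTheory ProbabilityTheory

theorem stmt_12 {Ω : Type*} [MeasurableSpace Ω] (P : Measure Ω) [IsProbabilityMeasure P]
    (Γ : Measure ℝ) [IsProbabilityMeasure Γ] (c₀ T θ : ℝ) (m : ℕ) (hm : 0 < m)
    (μs : Fin m → Ω → ℝ)
    (hmeas : ∀ i, Measurable (μs i))
    (hindep : iIndepFun μs P)
    (hlaw : ∀ i, Measure.map (μs i) P = Γ)
    (hsupp : Γ (Set.Icc (0 : ℝ) 1)ᶜ = 0)
    (hc₀ : 0 < c₀)
    (hreg : ∀ ε : ℝ, 0 < ε → ε ≤ 1 → c₀ * ε ≤ (Γ {x | 1 - ε < x}).toReal)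
    (hT : 1 ≤ T) (hθ : θ = Real.log T / (m * c₀)) (hθ1 : θ ≤ 1) :
    P {ω | (⨆ i, μs i ω) < 1 - θ} ≤ ENNReal.ofReal (1 / T)
    ∧ (m = ⌈Real.sqrt T⌉₊ →
        T * (1 - ∫ ω, (⨆ i, μs i ω) ∂P) ≤ 1 + Real.sqrt T * Real.log T / c₀) := by
  have hT0 : (0 : ℝ) < T := lt_of_lt_of_le one_pos hT
  have hlogT : 0 ≤ Real.log T := Real.log_nonneg hT
  have hmR : (0 : ℝ) < m := by exact_mod_cast hm
  have hθ0 : 0 ≤ θ := by rw [hθ]; positivity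
  have hne : Nonempty (Fin m) := ⟨⟨0, hm⟩⟩
  have hsupmeas : Measurable (fun ω => ⨆ i, μs i ω) := Measurable.iSup hmeas
  -- Step 1 : bound on Γ (Iio (1-θ))
  have hGam : (Γ (Set.Iio (1 - θ))).toReal ≤ Real.exp (-(c₀ * θ)) := by
    rcases eq_or_lt_of_le hθ0 with hz | hp
    · have h1 : (Γ (Set.Iio (1 - θ))).toReal ≤ 1 := by
        have := prob_le_one (μ := Γ) (s := Set.Iio (1 - θ))
        simpa using ENNReal.toReal_mono ENNReal.one_ne_top this
      have : Real.exp (-(c₀ * θ)) = 1 := by rw [← hz]; simp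
      linarith
    · have hsplit : (Γ (Set.Iio (1 - θ))).toReal = 1 - (Γ (Set.Ici (1 - θ))).toReal := by
        have h := measure_compl (μ := Γ) (measurableSet_Ici (a := 1 - θ)) (measure_ne_top Γ _)
        rw [Set.compl_Ici, measure_univ] at h
        rw [h, ENNReal.toReal_sub_of_le (prob_le_one) ENNReal.one_ne_top, ENNReal.toReal_one]
      have hmono : (Γ {x | 1 - θ < x}).toReal ≤ (Γ (Set.Ici (1 - θ))).toReal :=
        ENNReal.toReal_mono (measure_ne_top Γ _) (measure_mono Set.Ioi_subset_Ici_self)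
      have hr := hreg θ hp hθ1
      have hexp := Real.add_one_le_exp (-(c₀ * θ))
      rw [hsplit]; linarith
  have hprei : ∀ i, P (μs i ⁻¹' Set.Iio (1 - θ)) ≤ ENNReal.ofReal (Real.exp (-(c₀ * θ))) := by
    intro i
    have h1 : P (μs i ⁻¹' Set.Iio (1 - θ)) = Γ (Set.Iio (1 - θ)) := by
      rw [← hlaw i, Measure.map_apply (hmeas i) measurableSet_Iio]
    rw [h1, ← ENNReal.ofReal_toReal (measure_ne_top Γ _)]
    exact ENNReal.ofReal_le_ofReal hGam
  have hsub : {ω | (⨆ i, μs i ω) < 1 - θ} ⊆ ⋂ i, μs i ⁻¹' Set.Iio (1 - θ) := by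
    intro ω hω
    simp only [Set.mem_iInter, Set.mem_preimage, Set.mem_Iio]
    intro i
    exact lt_of_le_of_lt (le_ciSup (f := fun j => μs j ω) (Set.Finite.bddAbove (Set.finite_range _)) i) hω
  have hinter : P (⋂ i, μs i ⁻¹' Set.Iio (1 - θ)) = ∏ i, P (μs i ⁻¹' Set.Iio (1 - θ)) :=
    hindep.meas_iInter (fun i => ⟨Set.Iio (1 - θ), measurableSet_Iio, rfl⟩)
  have key : P {ω | (⨆ i, μs i ω) < 1 - θ} ≤ ENNReal.ofReal (1 / T) := by
    calc P {ω | (⨆ i, μs i ω) < 1 - θ} ≤ P (⋂ i, μs i ⁻¹' Set.Iio (1 - θ)) :=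
          measure_mono hsub
      _ = ∏ i, P (μs i ⁻¹' Set.Iio (1 - θ)) := hinter
      _ ≤ ∏ _i : Fin m, ENNReal.ofReal (Real.exp (-(c₀ * θ))) :=
          Finset.prod_le_prod' fun i _ => hprei i
      _ = ENNReal.ofReal (Real.exp (-(c₀ * θ))) ^ m := by
          simp [Finset.prod_const]
      _ = ENNReal.ofReal (Real.exp (-(c₀ * θ)) ^ m) := by
          rw [← ENNReal.ofReal_pow (Real.exp_nonneg _)]
      _ = ENNReal.ofReal (1 / T) := by
          congr 1
          rw [← Real.exp_nat_mul]
          have h2 : (m : ℝ) * (-(c₀ * θ)) = -Real.log T := by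
            rw [hθ]; field_simp
          rw [h2, Real.exp_neg, Real.exp_log hT0, one_div]
  refine ⟨key, fun hmm => ?_⟩
  -- a.e. bounds on the sup
  have haeIcc : ∀ᵐ ω ∂P, ∀ i, μs i ω ∈ Set.Icc (0 : ℝ) 1 := by
    rw [ae_all_iff]
    intro i
    have h1 : P ((μs i) ⁻¹' (Set.Icc (0 : ℝ) 1)ᶜ) = 0 := by
      rw [← Measure.map_apply (hmeas i) measurableSet_Icc.compl, hlaw i]; exact hsupp
    exact ae_iff.2 (by simpa [Set.preimage] using h1)
  have haesup : ∀ᵐ ω ∂P, 0 ≤ (⨆ i, μs i ω) ∧ (⨆ i, μs i ω) ≤ 1 := by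
    filter_upwards [haeIcc] with ω hω
    exact ⟨le_trans (hω ⟨0, hm⟩).1
        (le_ciSup (f := fun j => μs j ω) (Set.Finite.bddAbove (Set.finite_range _)) ⟨0, hm⟩),
      ciSup_le fun i => (hω i).2⟩
  have hint : Integrable (fun ω => ⨆ i, μs i ω) P := by
    refine Integrable.mono' (integrable_const 1) hsupmeas.aestronglyMeasurable ?_
    filter_upwards [haesup] with ω hω
    rw [Real.norm_eq_abs, abs_le]
    exact ⟨by linarith [hω.1], hω.2⟩
  set A := {ω | (⨆ i, μs i ω) < 1 - θ} with hA_def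
  have hA : MeasurableSet A := hsupmeas measurableSet_Iio
  have hPA : (P A).toReal ≤ 1 / T := by
    calc (P A).toReal ≤ (ENNReal.ofReal (1 / T)).toReal :=
          ENNReal.toReal_mono ENNReal.ofReal_ne_top key
      _ = 1 / T := ENNReal.toReal_ofReal (by positivity)
  have hbound : (fun ω => 1 - ⨆ i, μs i ω) ≤ᵐ[P]
      fun ω => A.indicator (fun _ => (1 : ℝ)) ω + θ := by
    filter_upwards [haesup] with ω hω
    by_cases hωA : ω ∈ A
    · rw [Set.indicator_of_mem hωA]; linarith [hω.1]
    · rw [Set.indicator_of_notMem hωA]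
      have h2 : 1 - θ ≤ ⨆ i, μs i ω := not_lt.1 hωA
      simp only [zero_add]; linarith
  have hindint : Integrable (A.indicator (fun _ => (1 : ℝ))) P :=
    (integrable_const 1).indicator hA
  have hI : ∫ ω, (1 - ⨆ i, μs i ω) ∂P ≤ (P A).toReal + θ := by
    calc ∫ ω, (1 - ⨆ i, μs i ω) ∂P
        ≤ ∫ ω, (A.indicator (fun _ => (1 : ℝ)) ω + θ) ∂P :=
          integral_mono_ae ((integrable_const 1).sub hint) (hindint.add (integrable_const θ))
            hbound
      _ = (P A).toReal + θ := by
          rw [integral_add hindint (integrable_const θ), integral_indicator_const _ hA,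
            integral_const]
          simp [smul_eq_mul, mul_comm]
          rfl
  have hIeq : ∫ ω, (1 - ⨆ i, μs i ω) ∂P = 1 - ∫ ω, (⨆ i, μs i ω) ∂P := by
    rw [integral_sub (integrable_const 1) hint, integral_const]; simp
  have hsq : Real.sqrt T ≤ (m : ℝ) := by rw [hmm]; exact Nat.le_ceil _
  have hsq0 : 0 < Real.sqrt T := Real.sqrt_pos.2 hT0
  have hTθ : T * θ ≤ Real.sqrt T * Real.log T / c₀ := by
    have hTm : T / m ≤ Real.sqrt T := by
      rw [div_le_iff₀ hmR]
      calc T = Real.sqrt T * Real.sqrt T := (Real.mul_self_sqrt hT0.le).symm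
        _ ≤ Real.sqrt T * m := mul_le_mul_of_nonneg_left hsq hsq0.le
    have h2 : T * θ = (T / m) * (Real.log T / c₀) := by rw [hθ]; field_simp
    rw [h2]
    calc (T / m) * (Real.log T / c₀) ≤ Real.sqrt T * (Real.log T / c₀) :=
          mul_le_mul_of_nonneg_right hTm (by positivity)
      _ = Real.sqrt T * Real.log T / c₀ := by ring
  calc T * (1 - ∫ ω, (⨆ i, μs i ω) ∂P) ≤ T * ((P A).toReal + θ) := by
        rw [← hIeq]; exact mul_le_mul_of_nonneg_left hI hT0.le
    _ ≤ T * (1 / T + θ) := mul_le_mul_of_nonneg_left (by linarith) hT0.le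
    _ = 1 + T * θ := by field_simp
    _ ≤ 1 + Real.sqrt T * Real.log T / c₀ := by linarith
end
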